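/- With the purely imaginary parameter setting of the context, the following identities hold: i·ζ − 2λ0 − Σ_{j=1}^n a_j²/(i·ζ + b_j) = 0; 1 + Σ_{j=1}^n a_j²/(i·ζ + b_j)² = 0; and Σ_{j=1}^n a_j²/(i·ζ + b_j)^{k+1} = 0 for every integer k with 2 ≤ k ≤ n. -/

import Mathlib

open Complex Matrix Finset

noncomputable section

/-- Index type for `(n+1)×(n+1)` matrices: a `1`-block plus an `n`-block. -/
abbrev Idx (n : ℕ) := Fin 1 ⊕ Fin n

/-- `ζ = 2·Im(λ0)/(n+1)`. -/
def zeta (n : ℕ) (l0 : ℂ) : ℝ := 2 * l0.im / (n + 1)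

/-- `ω_j = jπ/(n+1)`. -/
def om (n j : ℕ) : ℝ := j * Real.pi / (n + 1)

/-- `a_j = ζ·csc(ω_j)` for `j = 1,…,n` (indexed by `j : Fin n` as `j+1`). -/
def aa (n : ℕ) (l0 : ℂ) (j : Fin n) : ℝ := zeta n l0 / Real.sin (om n ((j : ℕ) + 1))

/-- `b_j = ζ·cot(ω_j) − 2·Re(λ0)` for `j = 1,…,n`. -/
def bb (n : ℕ) (l0 : ℂ) (j : Fin n) : ℝ :=
  zeta n l0 * (Real.cos (om n ((j : ℕ) + 1)) / Real.sin (om n ((j : ℕ) + 1))) - 2 * l0.re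

/-- `z0 = 2·Re(λ0) + i·ζ`. -/
def zz0 (n : ℕ) (l0 : ℂ) : ℂ := 2 * l0.re + Complex.I * zeta n l0

lemma om_pos {n : ℕ} (j : Fin n) : 0 < om n ((j : ℕ) + 1) := by
  unfold om
  have := Real.pi_pos
  positivity

lemma om_lt_pi {n : ℕ} (j : Fin n) : om n ((j : ℕ) + 1) < Real.pi := by
  unfold om
  rw [div_lt_iff₀ (by positivity)]
  have hj : ((j : ℕ) : ℝ) + 1 ≤ (n : ℝ) := by exact_mod_cast j.2
  push_cast
  nlinarith [Real.pi_pos]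

lemma sin_om_pos {n : ℕ} (j : Fin n) : 0 < Real.sin (om n ((j : ℕ) + 1)) :=
  Real.sin_pos_of_pos_of_lt_pi (om_pos j) (om_lt_pi j)

lemma zeta_ne {n : ℕ} {l0 : ℂ} (him : l0.im ≠ 0) : zeta n l0 ≠ 0 := by
  unfold zeta
  have : ((n : ℝ) + 1) ≠ 0 := by positivity
  field_simp
  exact div_ne_zero (mul_ne_zero two_ne_zero him) this

lemma hb {n : ℕ} {l0 : ℂ} (hre : l0.re = 0) (j : Fin n) :
    Complex.I * (zeta n l0 : ℂ) + (bb n l0 j : ℂ)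
      = (zeta n l0 : ℂ) * Complex.exp ((om n ((j : ℕ) + 1) : ℝ) * Complex.I)
        / (Real.sin (om n ((j : ℕ) + 1)) : ℂ) := by
  have hs : (Real.sin (om n ((j : ℕ) + 1)) : ℂ) ≠ 0 := by
    exact_mod_cast (sin_om_pos j).ne'
  have hs' : Complex.sin ((om n ((j : ℕ) + 1) : ℝ) : ℂ) ≠ 0 := by
    rw [← Complex.ofReal_sin]; exact hs
  rw [Complex.exp_mul_I, bb, hre, eq_div_iff hs]
  push_cast [Complex.ofReal_sin, Complex.ofReal_cos]
  field_simp
  ring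

lemma aux_inv (a b c : ℂ) (ha : a ≠ 0) (hb : b ≠ 0) (hc : c ≠ 0) :
    (a * b⁻¹ / c) * (c * b / a) = 1 := by
  field_simp

lemma termEq {n : ℕ} {l0 : ℂ} (hre : l0.re = 0) (him : l0.im ≠ 0) (m : ℕ) (j : Fin n) :
    (aa n l0 j : ℂ) ^ 2 / (Complex.I * (zeta n l0 : ℂ) + (bb n l0 j : ℂ)) ^ m
      = ((zeta n l0 : ℂ) / (Real.sin (om n ((j : ℕ) + 1)) : ℂ)) ^ 2
        * ((Real.sin (om n ((j : ℕ) + 1)) : ℂ)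
            * (Complex.exp ((om n ((j : ℕ) + 1) : ℝ) * Complex.I))⁻¹ / (zeta n l0 : ℂ)) ^ m := by
  have hs : (Real.sin (om n ((j : ℕ) + 1)) : ℂ) ≠ 0 := by
    exact_mod_cast (sin_om_pos j).ne'
  have hz : ((zeta n l0 : ℝ) : ℂ) ≠ 0 := by exact_mod_cast zeta_ne him
  have he : Complex.exp ((om n ((j : ℕ) + 1) : ℝ) * Complex.I) ≠ 0 := Complex.exp_ne_zero _
  have key : ((Real.sin (om n ((j : ℕ) + 1)) : ℂ)
        * (Complex.exp ((om n ((j : ℕ) + 1) : ℝ) * Complex.I))⁻¹ / (zeta n l0 : ℂ))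
      * ((zeta n l0 : ℂ) * Complex.exp ((om n ((j : ℕ) + 1) : ℝ) * Complex.I)
          / (Real.sin (om n ((j : ℕ) + 1)) : ℂ)) = 1 :=
    aux_inv _ _ _ hs he hz
  have hd : ((zeta n l0 : ℂ) * Complex.exp ((om n ((j : ℕ) + 1) : ℝ) * Complex.I)
      / (Real.sin (om n ((j : ℕ) + 1)) : ℂ)) ≠ 0 := by
    exact div_ne_zero (mul_ne_zero hz he) hs
  rw [hb hre, aa, Complex.ofReal_div]
  rw [div_eq_iff (pow_ne_zero m hd), mul_assoc, ← mul_pow, key, one_pow, mul_one]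

lemma term1 {n : ℕ} {l0 : ℂ} (hre : l0.re = 0) (him : l0.im ≠ 0) (j : Fin n) :
    (aa n l0 j : ℂ) ^ 2 / (Complex.I * (zeta n l0 : ℂ) + (bb n l0 j : ℂ))
      = (bb n l0 j : ℂ) - Complex.I * (zeta n l0 : ℂ) := by
  have hs : (Real.sin (om n ((j : ℕ) + 1)) : ℂ) ≠ 0 := by
    exact_mod_cast (sin_om_pos j).ne'
  have hz : ((zeta n l0 : ℝ) : ℂ) ≠ 0 := by exact_mod_cast zeta_ne him
  have h := termEq hre him 1 j
  rw [pow_one] at h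
  rw [h, bb, hre, ← Complex.exp_neg, ← neg_mul, Complex.exp_mul_I, Complex.cos_neg,
    Complex.sin_neg, ← Complex.ofReal_sin, ← Complex.ofReal_cos]
  simp only [Complex.ofReal_sub, Complex.ofReal_mul, Complex.ofReal_div, Complex.ofReal_zero,
    Complex.ofReal_ofNat, mul_zero]
  set S := ((Real.sin (om n ((j : ℕ) + 1)) : ℝ) : ℂ) with hS
  set C := ((Real.cos (om n ((j : ℕ) + 1)) : ℝ) : ℂ) with hC
  set Z := ((zeta n l0 : ℝ) : ℂ) with hZ
  field_simp
  ring

lemma sum_bb {n : ℕ} {l0 : ℂ} (hre : l0.re = 0) : ∑ j : Fin n, bb n l0 j = 0 := by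
  refine Finset.sum_involution (fun j _ => j.rev) ?_ ?_ (fun j _ => Finset.mem_univ _) ?_
  · intro j _
    have hjn := j.2
    have hrev : ((j.rev : ℕ) + 1) = n - (j : ℕ) := by
      rw [Fin.val_rev]; omega
    have hcast : ((n - (j : ℕ) : ℕ) : ℝ) = (n : ℝ) - (j : ℕ) := by
      rw [Nat.cast_sub (le_of_lt hjn)]
    have hom : om n (n - (j : ℕ)) = Real.pi - om n ((j : ℕ) + 1) := by
      unfold om
      rw [hcast]
      have hne : ((n : ℝ) + 1) ≠ 0 := by positivity
      field_simp
      push_cast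
      ring
    rw [bb, bb, hrev, hre, hom, Real.cos_pi_sub, Real.sin_pi_sub]
    ring
  · intro j _ hfj hgj
    apply hfj
    have hv := congrArg Fin.val hgj
    rw [Fin.val_rev] at hv
    have h2 : ((j : ℕ) + 1) * 2 = n + 1 := by omega
    have hom : om n ((j : ℕ) + 1) = Real.pi / 2 := by
      unfold om
      have h2' : (((j : ℕ) : ℝ) + 1) * 2 = (n : ℝ) + 1 := by exact_mod_cast h2
      rw [← h2']
      have : (((j : ℕ) : ℝ) + 1) ≠ 0 := by positivity
      field_simp
      push_cast
      ring
    rw [bb, hom, Real.cos_pi_div_two, hre]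
    simp
  · intro j _; exact Fin.rev_rev j

lemma pow_sum {n : ℕ} (hn : 1 ≤ n) {p : ℕ} (hp1 : 1 ≤ p) (hpn : p ≤ n) :
    ∑ j : Fin n, (Complex.exp ((-(2 * Real.pi / ((n : ℝ) + 1)) : ℝ) * Complex.I)) ^ (p * ((j : ℕ) + 1))
      = -1 := by
  set u := Complex.exp ((-(2 * Real.pi / ((n : ℝ) + 1)) : ℝ) * Complex.I) with hu
  set v := u ^ p with hv
  have hcast : ((n : ℂ) + 1) ≠ 0 := by
    have : (0:ℝ) < (n:ℝ) + 1 := by positivity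
    simp only [ne_eq, ← Nat.cast_succ]
    exact_mod_cast this.ne'
  have hu1 : u ^ (n + 1) = 1 := by
    rw [hu, ← Complex.exp_nat_mul]
    have : ((n + 1 : ℕ) : ℂ) * (((-(2 * Real.pi / ((n : ℝ) + 1)) : ℝ) : ℂ) * Complex.I)
        = -(2 * (Real.pi : ℂ) * Complex.I) := by
      push_cast
      field_simp
    rw [this, Complex.exp_neg, Complex.exp_two_pi_mul_I, inv_one]
  have hv1 : v ^ (n + 1) = 1 := by
    rw [hv, ← pow_mul, mul_comm p (n+1), pow_mul, hu1, one_pow]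
  have hvne : v ≠ 1 := by
    rw [hv, hu, ← Complex.exp_nat_mul]
    intro heq
    rw [Complex.exp_eq_one_iff] at heq
    obtain ⟨k, hk⟩ := heq
    have h1 : ((-(p * (2 * Real.pi) / ((n:ℝ)+1)) : ℝ) : ℂ) * Complex.I
        = (((k * (2 * Real.pi)) : ℝ) : ℂ) * Complex.I := by
      push_cast
      push_cast at hk
      linear_combination hk
    have h2 : (-(p * (2 * Real.pi) / ((n:ℝ)+1)) : ℝ) = k * (2 * Real.pi) := by
      exact_mod_cast mul_right_cancel₀ Complex.I_ne_zero h1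
    have hne : ((n:ℝ) + 1) ≠ 0 := by positivity
    have h3 : -((p:ℝ) * (2 * Real.pi)) = k * (2 * Real.pi) * ((n:ℝ)+1) := by
      field_simp at h2
      linear_combination (2 * Real.pi) * h2
    have hpi := Real.pi_pos
    have h4 : (p : ℝ) = (-k) * ((n:ℝ) + 1) := by nlinarith
    have h5 : (p : ℤ) = (-k) * ((n:ℤ) + 1) := by exact_mod_cast h4
    have hp1' : (1 : ℤ) ≤ (p:ℤ) := by exact_mod_cast hp1
    have hpn' : (p : ℤ) ≤ (n:ℤ) := by exact_mod_cast hpn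
    rcases le_or_gt k (-1) with hk' | hk'
    · nlinarith
    · have hk0 : (0:ℤ) ≤ k := by omega
      nlinarith
  have hgeom : ∑ i ∈ Finset.range (n + 1), v ^ i = 0 := by
    rw [geom_sum_eq hvne, hv1, sub_self, zero_div]
  have hsplit := Finset.sum_range_succ' (fun i => v ^ i) n
  rw [hgeom] at hsplit
  have hfin : ∑ j : Fin n, v ^ ((j : ℕ) + 1) = ∑ i ∈ Finset.range n, v ^ (i + 1) :=
    Fin.sum_univ_eq_sum_range (fun i => v ^ (i + 1)) n
  have : ∑ j : Fin n, v ^ ((j : ℕ) + 1) = -1 := by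
    rw [hfin]
    simp only [pow_zero] at hsplit
    linear_combination -hsplit
  calc ∑ j : Fin n, u ^ (p * ((j : ℕ) + 1))
      = ∑ j : Fin n, v ^ ((j : ℕ) + 1) := by
        apply Finset.sum_congr rfl
        intro j _
        rw [hv, ← pow_mul]
    _ = -1 := this

lemma exp_bridge {n : ℕ} (j : Fin n) (q : ℕ) :
    (((Complex.exp ((om n ((j : ℕ) + 1) : ℝ) * Complex.I))⁻¹) ^ 2) ^ q
      = (Complex.exp ((-(2 * Real.pi / ((n : ℝ) + 1)) : ℝ) * Complex.I)) ^ (q * ((j : ℕ) + 1)) := by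
  rw [← Complex.exp_neg, ← pow_mul, ← Complex.exp_nat_mul, ← Complex.exp_nat_mul]
  congr 1
  unfold om
  have hne : ((n : ℝ) + 1) ≠ 0 := by positivity
  push_cast
  field_simp

lemma alg3 (E S Z : ℂ) (q : ℕ) (hE : E ≠ 0) (hS : S ≠ 0) (hZ : Z ≠ 0)
    (hsin : 2 * Complex.I * S = E - E⁻¹) :
    (Z / S) ^ 2 * (S * E⁻¹ / Z) ^ (q + 2)
      = ((2 * Complex.I * Z)⁻¹) ^ q * ((E⁻¹) ^ 2 * (1 - (E⁻¹) ^ 2) ^ q) := by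
  have hIZ : (2 * Complex.I * Z) ≠ 0 := by
    exact mul_ne_zero (mul_ne_zero two_ne_zero Complex.I_ne_zero) hZ
  have hX : 1 - (E⁻¹) ^ 2 = E⁻¹ * (2 * Complex.I * S) := by
    rw [hsin]
    field_simp
  have hSE : S * E⁻¹ / Z = (2 * Complex.I * Z)⁻¹ * (1 - (E⁻¹) ^ 2) := by
    rw [hX]
    field_simp
  have h2 : (Z / S) ^ 2 * ((2 * Complex.I * Z)⁻¹ * (1 - (E⁻¹) ^ 2)) ^ 2 = (E⁻¹) ^ 2 := by
    rw [← hSE, ← mul_pow]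
    congr 1
    field_simp
  rw [hSE]
  calc (Z / S) ^ 2 * ((2 * Complex.I * Z)⁻¹ * (1 - (E⁻¹) ^ 2)) ^ (q + 2)
      = ((Z / S) ^ 2 * ((2 * Complex.I * Z)⁻¹ * (1 - (E⁻¹) ^ 2)) ^ 2)
          * ((2 * Complex.I * Z)⁻¹ * (1 - (E⁻¹) ^ 2)) ^ q := by ring
    _ = (E⁻¹) ^ 2 * ((2 * Complex.I * Z)⁻¹ * (1 - (E⁻¹) ^ 2)) ^ q := by rw [h2]
    _ = ((2 * Complex.I * Z)⁻¹) ^ q * ((E⁻¹) ^ 2 * (1 - (E⁻¹) ^ 2) ^ q) := by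
        rw [mul_pow]; ring

lemma aux_inv2 (a b c : ℂ) (ha : a ≠ 0) (hc : c ≠ 0) : c / a * (a * b⁻¹ / c) = b⁻¹ := by
  field_simp

lemma hsinE {n : ℕ} (j : Fin n) :
    2 * Complex.I * (Real.sin (om n ((j : ℕ) + 1)) : ℂ)
      = Complex.exp ((om n ((j : ℕ) + 1) : ℝ) * Complex.I)
        - (Complex.exp ((om n ((j : ℕ) + 1) : ℝ) * Complex.I))⁻¹ := by
  rw [Complex.ofReal_sin, Complex.sin, neg_mul, Complex.exp_neg]
  ring_nf
  rw [Complex.I_sq]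
  ring

lemma term2 {n : ℕ} {l0 : ℂ} (hre : l0.re = 0) (him : l0.im ≠ 0) (j : Fin n) :
    (aa n l0 j : ℂ) ^ 2 / (Complex.I * (zeta n l0 : ℂ) + (bb n l0 j : ℂ)) ^ 2
      = ((Complex.exp ((om n ((j : ℕ) + 1) : ℝ) * Complex.I))⁻¹) ^ 2 := by
  have hs : (Real.sin (om n ((j : ℕ) + 1)) : ℂ) ≠ 0 := by
    exact_mod_cast (sin_om_pos j).ne'
  have hz : ((zeta n l0 : ℝ) : ℂ) ≠ 0 := by exact_mod_cast zeta_ne him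
  have he : Complex.exp ((om n ((j : ℕ) + 1) : ℝ) * Complex.I) ≠ 0 := Complex.exp_ne_zero _
  rw [termEq hre him 2 j, ← mul_pow]
  congr 1
  exact aux_inv2 _ _ _ hs hz

lemma term3 {n : ℕ} {l0 : ℂ} (hre : l0.re = 0) (him : l0.im ≠ 0) (j : Fin n) (q : ℕ) :
    (aa n l0 j : ℂ) ^ 2 / (Complex.I * (zeta n l0 : ℂ) + (bb n l0 j : ℂ)) ^ (q + 2)
      = ((2 * Complex.I * (zeta n l0 : ℂ))⁻¹) ^ q
        * (((Complex.exp ((om n ((j : ℕ) + 1) : ℝ) * Complex.I))⁻¹) ^ 2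
            * (1 - ((Complex.exp ((om n ((j : ℕ) + 1) : ℝ) * Complex.I))⁻¹) ^ 2) ^ q) := by
  have hs : (Real.sin (om n ((j : ℕ) + 1)) : ℂ) ≠ 0 := by
    exact_mod_cast (sin_om_pos j).ne'
  have hz : ((zeta n l0 : ℝ) : ℂ) ≠ 0 := by exact_mod_cast zeta_ne him
  have he : Complex.exp ((om n ((j : ℕ) + 1) : ℝ) * Complex.I) ≠ 0 := Complex.exp_ne_zero _
  rw [termEq hre him (q + 2) j]
  exact alg3 _ _ _ q he hs hz (hsinE j)

lemma innerSumZero {n : ℕ} (hn : 1 ≤ n) {q : ℕ} (hq1 : 1 ≤ q) (hqn : q + 1 ≤ n) :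
    ∑ j : Fin n, (((Complex.exp ((om n ((j : ℕ) + 1) : ℝ) * Complex.I))⁻¹) ^ 2
        * (1 - ((Complex.exp ((om n ((j : ℕ) + 1) : ℝ) * Complex.I))⁻¹) ^ 2) ^ q) = 0 := by
  set X : Fin n → ℂ := fun j => ((Complex.exp ((om n ((j : ℕ) + 1) : ℝ) * Complex.I))⁻¹) ^ 2
    with hX
  have hps : ∀ p : ℕ, 1 ≤ p → p ≤ n → ∑ j : Fin n, X j ^ p = -1 := by
    intro p h1 h2
    have : ∀ j : Fin n, X j ^ p
        = (Complex.exp ((-(2 * Real.pi / ((n : ℝ) + 1)) : ℝ) * Complex.I)) ^ (p * ((j : ℕ) + 1)) :=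
      fun j => exp_bridge j p
    rw [Finset.sum_congr rfl (fun j _ => this j)]
    exact pow_sum hn h1 h2
  have hbin : ∀ j : Fin n, X j * (1 - X j) ^ q
      = ∑ t ∈ Finset.range (q + 1), ((-1 : ℂ) ^ (q - t) * ((q.choose t : ℕ) : ℂ)) * X j ^ (q + 1 - t) := by
    intro j
    have hb := add_pow (1 : ℂ) (-(X j)) q
    have h1x : (1 : ℂ) - X j = 1 + -(X j) := by ring
    rw [h1x, hb, Finset.mul_sum]
    apply Finset.sum_congr rfl
    intro t ht
    simp only [one_pow, one_mul]
    rw [neg_pow]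
    have hkt : q + 1 - t = (q - t) + 1 := by
      simp only [Finset.mem_range] at ht; omega
    rw [hkt, pow_succ]
    ring
  rw [Finset.sum_congr rfl (fun j _ => hbin j), Finset.sum_comm]
  have hstep : ∀ t ∈ Finset.range (q + 1),
      ∑ j : Fin n, ((-1 : ℂ) ^ (q - t) * ((q.choose t : ℕ) : ℂ)) * X j ^ (q + 1 - t)
        = -(((-1 : ℂ) ^ (q - t)) * ((q.choose t : ℕ) : ℂ)) := by
    intro t ht
    simp only [Finset.mem_range] at ht
    rw [← Finset.mul_sum, hps (q + 1 - t) (by omega) (by omega)]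
    ring
  rw [Finset.sum_congr rfl hstep]
  have hzero : ∑ t ∈ Finset.range (q + 1), (1 : ℂ) ^ t * (-1 : ℂ) ^ (q - t) * ((q.choose t : ℕ) : ℂ) = 0 := by
    rw [← add_pow (1 : ℂ) (-1) q]
    have : (1 : ℂ) + -1 = 0 := by ring
    rw [this, zero_pow (by omega)]
  calc ∑ t ∈ Finset.range (q + 1), -(((-1 : ℂ) ^ (q - t)) * ((q.choose t : ℕ) : ℂ))
      = -∑ t ∈ Finset.range (q + 1), (1 : ℂ) ^ t * (-1 : ℂ) ^ (q - t) * ((q.choose t : ℕ) : ℂ) := by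
        rw [← Finset.sum_neg_distrib]
        apply Finset.sum_congr rfl
        intro t _
        ring
    _ = 0 := by rw [hzero, neg_zero]

/-- with the purely imaginary parameter setting, the identities
`iζ − 2λ0 − Σⱼ aⱼ²/(iζ+bⱼ) = 0`, `1 + Σⱼ aⱼ²/(iζ+bⱼ)² = 0`, and
`Σⱼ aⱼ²/(iζ+bⱼ)^{k+1} = 0` for `2 ≤ k ≤ n` hold. -/
theorem stmt7 (n : ℕ) (hn : 1 ≤ n) (l0 : ℂ) (hre : l0.re = 0) (him : l0.im ≠ 0) :
    (Complex.I * zeta n l0 - 2 * l0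
        - ∑ j, (aa n l0 j : ℂ) ^ 2 / (Complex.I * zeta n l0 + (bb n l0 j : ℂ)) = 0) ∧
    (1 + ∑ j, (aa n l0 j : ℂ) ^ 2 / (Complex.I * zeta n l0 + (bb n l0 j : ℂ)) ^ 2 = 0) ∧
    (∀ k : ℕ, 2 ≤ k → k ≤ n →
      ∑ j, (aa n l0 j : ℂ) ^ 2 / (Complex.I * zeta n l0 + (bb n l0 j : ℂ)) ^ (k + 1) = 0) := by
  have hl0 : l0 = (l0.im : ℂ) * Complex.I := by
    rw [← Complex.re_add_im l0, hre]; simp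
  have hnne : ((n : ℂ) + 1) ≠ 0 := by
    have : (0 : ℝ) < (n : ℝ) + 1 := by positivity
    exact_mod_cast (show ((n : ℝ) + 1 : ℝ) ≠ 0 from this.ne')
  refine ⟨?_, ?_, ?_⟩
  · rw [Finset.sum_congr rfl (fun j _ => term1 hre him j)]
    rw [Finset.sum_sub_distrib, Finset.sum_const, Finset.card_univ, Fintype.card_fin]
    have hsb : ∑ j : Fin n, (bb n l0 j : ℂ) = 0 := by
      rw [← Complex.ofReal_sum, sum_bb hre, Complex.ofReal_zero]
    rw [hsb, zeta]
    push_cast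
    simp only [nsmul_eq_mul]
    field_simp
    linear_combination (-2 * ((n : ℂ) + 1)) * hl0
  · rw [Finset.sum_congr rfl (fun j _ => term2 hre him j)]
    have : ∑ j : Fin n, ((Complex.exp ((om n ((j : ℕ) + 1) : ℝ) * Complex.I))⁻¹) ^ 2 = -1 := by
      have hbr : ∀ j : Fin n, ((Complex.exp ((om n ((j : ℕ) + 1) : ℝ) * Complex.I))⁻¹) ^ 2
          = (Complex.exp ((-(2 * Real.pi / ((n : ℝ) + 1)) : ℝ) * Complex.I)) ^ (1 * ((j : ℕ) + 1)) := by
        intro j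
        rw [← exp_bridge j 1, pow_one]
      rw [Finset.sum_congr rfl (fun j _ => hbr j)]
      exact pow_sum hn le_rfl hn
    rw [this]
    ring
  · intro k hk2 hkn
    obtain ⟨q, rfl⟩ : ∃ q, k = q + 1 := ⟨k - 1, by omega⟩
    simp only [show q + 1 + 1 = q + 2 from rfl]
    rw [Finset.sum_congr rfl (fun j _ => term3 hre him j q), ← Finset.mul_sum,
      innerSumZero hn (by omega) (by omega), mul_zero]

end
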